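/- Let p be an odd natural number and define the rational function g(t) = Re((t+i)^p)/Im((t+i)^p) for real t where the denominator is nonzero. Then g'(t) = p·(1+t²)^{p-1} / (Im((t+i)^p))². -/

import Mathlib

/-- The function `g(t) = Re((t+i)^p)/Im((t+i)^p)` (junk where the denominator
vanishes). -/
noncomputable def g5 (p : ℕ) : ℝ → ℝ :=
  fun t => (((t : ℂ) + Complex.I) ^ p).re / (((t : ℂ) + Complex.I) ^ p).im

/-- For odd `p` and real `t` with `Im((t+i)^p) ≠ 0`, the function
`g(t) = Re((t+i)^p)/Im((t+i)^p)` satisfies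
`g'(t) = p (1+t²)^{p−1} / Im((t+i)^p)²`. -/
theorem stmt5 (p : ℕ) (hp : Odd p) (t : ℝ)
    (h : (((t : ℂ) + Complex.I) ^ p).im ≠ 0) :
    HasDerivAt (g5 p)
      ((p : ℝ) * (1 + t ^ 2) ^ (p - 1) / ((((t : ℂ) + Complex.I) ^ p).im) ^ 2)
      t := by
  have hp1 : 0 < p := hp.pos
  set f' : ℂ := (p : ℂ) * ((t : ℂ) + Complex.I) ^ (p - 1) with hf'
  have hdc : HasDerivAt (fun z : ℂ => (z + Complex.I) ^ p) f' (t : ℂ) := by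
    simpa [hf'] using (((hasDerivAt_id ((t : ℂ))).add_const Complex.I).fun_pow p)
  have hdr : HasDerivAt (fun s : ℝ => ((s : ℂ) + Complex.I) ^ p) f' t :=
    hdc.comp_ofReal
  have hu : HasDerivAt (fun s : ℝ => (((s : ℂ) + Complex.I) ^ p).re) f'.re t :=
    Complex.reCLM.hasFDerivAt.comp_hasDerivAt t hdr
  have hv : HasDerivAt (fun s : ℝ => (((s : ℂ) + Complex.I) ^ p).im) f'.im t :=
    Complex.imCLM.hasFDerivAt.comp_hasDerivAt t hdr
  have hmul : ((t : ℂ) + Complex.I) * ((t : ℂ) - Complex.I) = ((1 + t ^ 2 : ℝ) : ℂ) := by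
    have := Complex.I_sq
    push_cast
    ring_nf
    rw [Complex.I_sq]
    ring
  have hc : ((t : ℂ) + Complex.I) ^ p * (starRingEnd ℂ) f' =
      (p : ℂ) * (((t : ℂ) + Complex.I) * ((1 + t ^ 2 : ℝ) : ℂ) ^ (p - 1)) := by
    obtain ⟨q, rfl⟩ : ∃ q, p = q + 1 := ⟨p - 1, (Nat.succ_pred_eq_of_pos hp1).symm⟩
    simp only [hf', map_mul, map_pow, map_natCast, map_add, Complex.conj_ofReal,
      Complex.conj_I, Nat.add_sub_cancel]
    have hpow : ((t : ℂ) + Complex.I) ^ q * ((t : ℂ) - Complex.I) ^ q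
        = ((1 + t ^ 2 : ℝ) : ℂ) ^ q := by rw [← mul_pow, hmul]
    rw [pow_succ]
    push_cast at hpow ⊢
    linear_combination ((q : ℂ) + 1) * ((t : ℂ) + Complex.I) * hpow
  have key : f'.re * (((t : ℂ) + Complex.I) ^ p).im
      - (((t : ℂ) + Complex.I) ^ p).re * f'.im = (p : ℝ) * (1 + t ^ 2) ^ (p - 1) := by
    have him := congrArg Complex.im hc
    simp only [Complex.mul_im, Complex.conj_re, Complex.conj_im, Complex.add_re,
      Complex.add_im, Complex.ofReal_re, Complex.ofReal_im, Complex.I_re, Complex.I_im,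
      Complex.natCast_re, Complex.natCast_im, ← Complex.ofReal_pow] at him
    linarith [him]
  have hdiv : HasDerivAt (g5 p)
      ((f'.re * (((t : ℂ) + Complex.I) ^ p).im
        - (((t : ℂ) + Complex.I) ^ p).re * f'.im) / (((t : ℂ) + Complex.I) ^ p).im ^ 2) t :=
    hu.div hv h
  rwa [key] at hdiv
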